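/- arXiv:2403.14688 — 3 statements merged into one kernel-verified Lean document; each statement's English description precedes it below -/
import Mathlib

section
/- Let A⁺ be a d×d matrix with nonnegative entries, B a k×k matrix with nonnegative entries, and W, W' be d×k matrices with strictly positive entries. Then Tr(A⁺ W B W^T) = Σ_{i,j,m,n} A⁺_{ij} W_{jm} B_{mn} W_{in} ≥ Σ_{i,j,m,n} A⁺_{ij} W'_{jm} B_{mn} W'_{in} · (1 + log(W_{jm}W_{in}/(W'_{jm}W'_{in}))). -/
theorem trace_AWBWt_log_bound (d k : ℕ)
    (Apos : Matrix (Fin d) (Fin d) ℝ) (B : Matrix (Fin k) (Fin k) ℝ)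
    (W W' : Matrix (Fin d) (Fin k) ℝ)
    (hA : ∀ i j, 0 ≤ Apos i j) (hB : ∀ m n, 0 ≤ B m n)
    (hW : ∀ i j, 0 < W i j) (hW' : ∀ i j, 0 < W' i j) :
    (Apos * W * B * W.transpose).trace
      = ∑ i, ∑ j, ∑ m, ∑ n, Apos i j * W j m * B m n * W i n ∧
    ∑ i, ∑ j, ∑ m, ∑ n, Apos i j * W' j m * B m n * W' i n *
        (1 + Real.log (W j m * W i n / (W' j m * W' i n)))
      ≤ ∑ i, ∑ j, ∑ m, ∑ n, Apos i j * W j m * B m n * W i n := by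
  constructor
  · simp only [Matrix.trace, Matrix.diag, Matrix.mul_apply, Matrix.transpose_apply,
      Finset.sum_mul, Finset.mul_sum]
    refine Finset.sum_congr rfl fun i _ => ?_
    rw [Finset.sum_comm]
    conv_rhs => rw [Finset.sum_comm]
    refine Finset.sum_congr rfl fun m _ => ?_
    conv_rhs => rw [Finset.sum_comm]
  · refine Finset.sum_le_sum fun i _ => Finset.sum_le_sum fun j _ =>
      Finset.sum_le_sum fun m _ => Finset.sum_le_sum fun n _ => ?_
    set z : ℝ := W j m * W i n / (W' j m * W' i n) with hz
    have hzpos : 0 < z := div_pos (mul_pos (hW j m) (hW i n))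
      (mul_pos (hW' j m) (hW' i n))
    have hlog : 1 + Real.log z ≤ z := by
      have := Real.add_one_le_exp (Real.log z)
      rwa [Real.exp_log hzpos, add_comm] at this
    have hc : 0 ≤ Apos i j * W' j m * B m n * W' i n :=
      mul_nonneg (mul_nonneg (mul_nonneg (hA i j) (hW' j m).le) (hB m n)) (hW' i n).le
    calc Apos i j * W' j m * B m n * W' i n * (1 + Real.log z)
        ≤ Apos i j * W' j m * B m n * W' i n * z := by
          exact mul_le_mul_of_nonneg_left hlog hc
      _ = Apos i j * W j m * B m n * W i n := by
          have h1 := (hW' j m).ne'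
          have h2 := (hW' i n).ne'
          rw [hz]
          field_simp
end

section
/- Let A be a symmetric d×d matrix with nonnegative entries, B a symmetric k×k matrix with nonnegative entries, and W, W' be d×k matrices with strictly positive entries. Then Tr(A W B W^T) ≤ Σ_{i=1}^d Σ_{j=1}^k (A W' B)_{ij} · W_{ij}² / W'_{ij}. -/
theorem ding_prop6 (d k : ℕ)
    (A : Matrix (Fin d) (Fin d) ℝ) (B : Matrix (Fin k) (Fin k) ℝ)
    (hAsymm : A.transpose = A) (hBsymm : B.transpose = B)
    (hA : ∀ i j, 0 ≤ A i j) (hB : ∀ m n, 0 ≤ B m n)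
    (W W' : Matrix (Fin d) (Fin k) ℝ)
    (hW : ∀ i j, 0 < W i j) (hW' : ∀ i j, 0 < W' i j) :
    (A * W * B * W.transpose).trace
      ≤ ∑ i, ∑ j, (A * W' * B) i j * (W i j) ^ 2 / W' i j := by
  have hexp : (A * W * B * W.transpose).trace
      = ∑ i, ∑ j, ∑ p, ∑ q, A i p * W p q * B q j * W i j := by
    simp only [Matrix.trace, Matrix.diag_apply, Matrix.mul_apply, Matrix.transpose_apply,
      Finset.sum_mul, Finset.mul_sum]
    apply Finset.sum_congr rfl; intro i _
    apply Finset.sum_congr rfl; intro j _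
    rw [Finset.sum_comm]
  have hrhs : (∑ i, ∑ j, (A * W' * B) i j * (W i j) ^ 2 / W' i j)
      = ∑ i, ∑ j, ∑ p, ∑ q, A i p * W' p q * B q j * (W i j) ^ 2 / W' i j := by
    apply Finset.sum_congr rfl; intro i _
    apply Finset.sum_congr rfl; intro j _
    simp only [Matrix.mul_apply, Finset.sum_mul, Finset.sum_div]
    rw [Finset.sum_comm]
  rw [hexp, hrhs]
  -- pointwise AM-GM bound
  have key : ∀ (i p : Fin d) (j q : Fin k),
      2 * (A i p * W p q * B q j * W i j)
        ≤ A i p * W' p q * B q j * (W i j) ^ 2 / W' i j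
          + A p i * W' i j * B j q * (W p q) ^ 2 / W' p q := by
    intro i p j q
    have hAs : A p i = A i p := by
      have h := congrFun (congrFun hAsymm i) p
      simpa [Matrix.transpose_apply] using h
    have hBs : B j q = B q j := by
      have h := congrFun (congrFun hBsymm q) j
      simpa [Matrix.transpose_apply] using h
    rw [hAs, hBs]
    have hwij := hW' i j
    have hwpq := hW' p q
    have habpos : 0 ≤ A i p * B q j := mul_nonneg (hA i p) (hB q j)
    have expand : A i p * W p q * B q j * W i j
        = (A i p * B q j * (W' p q * W' i j)) * ((W p q / W' p q) * (W i j / W' i j)) := by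
      field_simp
    have expand2 : A i p * W' p q * B q j * (W i j) ^ 2 / W' i j
        = (A i p * B q j * (W' p q * W' i j)) * (W i j / W' i j) ^ 2 := by
      field_simp
    have expand3 : A i p * W' i j * B q j * (W p q) ^ 2 / W' p q
        = (A i p * B q j * (W' p q * W' i j)) * (W p q / W' p q) ^ 2 := by
      field_simp
    rw [expand, expand2, expand3]
    set c := A i p * B q j * (W' p q * W' i j) with hc
    have hcpos : 0 ≤ c := mul_nonneg habpos (le_of_lt (mul_pos hwpq hwij))
    set x := W p q / W' p q
    set y := W i j / W' i j
    nlinarith [mul_nonneg hcpos (sq_nonneg (x - y))]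
  have step1 : (∑ i, ∑ j, ∑ p, ∑ q, 2 * (A i p * W p q * B q j * W i j))
      ≤ ∑ i, ∑ j, ∑ p, ∑ q,
          (A i p * W' p q * B q j * (W i j) ^ 2 / W' i j
            + A p i * W' i j * B j q * (W p q) ^ 2 / W' p q) := by
    apply Finset.sum_le_sum; intro i _
    apply Finset.sum_le_sum; intro j _
    apply Finset.sum_le_sum; intro p _
    apply Finset.sum_le_sum; intro q _
    exact key i p j q
  have e1 : (∑ i, ∑ j, ∑ p, ∑ q, 2 * (A i p * W p q * B q j * W i j))
      = 2 * ∑ i, ∑ j, ∑ p, ∑ q, A i p * W p q * B q j * W i j := by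
    simp only [← Finset.mul_sum]
  have e2 : (∑ i, ∑ j, ∑ p, ∑ q,
        (A i p * W' p q * B q j * (W i j) ^ 2 / W' i j
          + A p i * W' i j * B j q * (W p q) ^ 2 / W' p q))
      = (∑ i, ∑ j, ∑ p, ∑ q, A i p * W' p q * B q j * (W i j) ^ 2 / W' i j)
        + ∑ i, ∑ j, ∑ p, ∑ q, A p i * W' i j * B j q * (W p q) ^ 2 / W' p q := by
    simp only [Finset.sum_add_distrib]
  have hswap : ∀ F : Fin d → Fin k → Fin d → Fin k → ℝ,
      (∑ i, ∑ j, ∑ p, ∑ q, F i j p q) = ∑ p, ∑ q, ∑ i, ∑ j, F i j p q := by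
    intro F
    have h := Finset.sum_comm (s := (Finset.univ : Finset (Fin d × Fin k)))
      (t := (Finset.univ : Finset (Fin d × Fin k)))
      (f := fun x y => F x.1 x.2 y.1 y.2)
    simpa [Fintype.sum_prod_type] using h
  have swap : (∑ i, ∑ j, ∑ p, ∑ q, A p i * W' i j * B j q * (W p q) ^ 2 / W' p q)
      = ∑ i, ∑ j, ∑ p, ∑ q, A i p * W' p q * B q j * (W i j) ^ 2 / W' i j := by
    rw [hswap (fun i j p q => A p i * W' i j * B j q * (W p q) ^ 2 / W' p q)]
  rw [e1, e2, swap] at step1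
  linarith
end

section
/- With the same definitions, G(W, W') ≥ J(W) for all strictly positive W, W'; i.e., G is an auxiliary function for J (upper-bounding it and matching at W' = W), which implies that updating W ← argmin_W G(W, W') yields a non-increasing sequence J(W^{(t+1)}) ≤ G(W^{(t+1)}, W^{(t)}) ≤ G(W^{(t)}, W^{(t)}) = J(W^{(t)}). -/
open Finset

lemma sum_rot3 {α β γ : Type*} [Fintype α] [Fintype β] [Fintype γ] (f : α → β → γ → ℝ) :
    ∑ a, ∑ b, ∑ c, f a b c = ∑ c, ∑ a, ∑ b, f a b c :=
  calc ∑ a, ∑ b, ∑ c, f a b c = ∑ a, ∑ c, ∑ b, f a b c :=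
        Finset.sum_congr rfl (fun _ _ => Finset.sum_comm)
   _ = ∑ c, ∑ a, ∑ b, f a b c := Finset.sum_comm

lemma sum_swap4 {d k : ℕ} (f : Fin d → Fin k → Fin d → Fin k → ℝ) :
    ∑ i, ∑ n, ∑ j, ∑ m, f i n j m = ∑ i, ∑ n, ∑ j, ∑ m, f j m i n := by
  have h : ∀ g : Fin d → Fin k → Fin d → Fin k → ℝ,
      (∑ i, ∑ n, ∑ j, ∑ m, g i n j m)
        = ∑ p : (Fin d × Fin k) × (Fin d × Fin k), g p.1.1 p.1.2 p.2.1 p.2.2 := by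
    intro g; simp only [Fintype.sum_prod_type]
  rw [h, h]
  exact Fintype.sum_equiv (Equiv.prodComm _ _) _ _ (fun p => rfl)

lemma sum4_le {d k : ℕ} (f g : Fin d → Fin k → Fin d → Fin k → ℝ)
    (h : ∀ i n j m, f i n j m ≤ g i n j m) :
    ∑ i, ∑ n, ∑ j, ∑ m, f i n j m ≤ ∑ i, ∑ n, ∑ j, ∑ m, g i n j m :=
  Finset.sum_le_sum fun i _ => Finset.sum_le_sum fun n _ => Finset.sum_le_sum fun j _ =>
    Finset.sum_le_sum fun m _ => h i n j m

lemma sum4_congr {d k : ℕ} (f g : Fin d → Fin k → Fin d → Fin k → ℝ)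
    (h : ∀ i n j m, f i n j m = g i n j m) :
    ∑ i, ∑ n, ∑ j, ∑ m, f i n j m = ∑ i, ∑ n, ∑ j, ∑ m, g i n j m :=
  Finset.sum_congr rfl fun i _ => Finset.sum_congr rfl fun n _ => Finset.sum_congr rfl fun j _ =>
    Finset.sum_congr rfl fun m _ => h i n j m

lemma trace_expand (d k : ℕ) (S : Matrix (Fin d) (Fin d) ℝ) (B : Matrix (Fin k) (Fin k) ℝ)
    (W : Matrix (Fin d) (Fin k) ℝ) :
    (S * W * B * W.transpose).trace = ∑ i, ∑ j, ∑ m, ∑ n, S i j * W j m * B m n * W i n := by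
  simp only [Matrix.trace, Matrix.diag, Matrix.mul_apply, Matrix.transpose_apply,
    Finset.sum_mul, Finset.mul_sum]
  apply Finset.sum_congr rfl; intro i _
  rw [sum_rot3 (fun y x j => S i j * W j x * B x y * W i y)]
  apply Finset.sum_congr rfl; intro j _
  rw [Finset.sum_comm]

lemma quad_bound (d k : ℕ) (S : Matrix (Fin d) (Fin d) ℝ) (B : Matrix (Fin k) (Fin k) ℝ)
    (hS : ∀ i j, 0 ≤ S i j) (hSsymm : S.transpose = S)
    (hB : ∀ m n, 0 ≤ B m n) (hBsymm : B.transpose = B)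
    (W W' : Matrix (Fin d) (Fin k) ℝ) (hW' : ∀ i j, 0 < W' i j) :
    (S * W * B * W.transpose).trace ≤ ∑ i, ∑ j, (S * W' * B) i j * (W i j) ^ 2 / W' i j := by
  have hS' : ∀ i j, S j i = S i j := fun i j => by conv_lhs => rw [← hSsymm, Matrix.transpose_apply]
  have hB' : ∀ m n, B n m = B m n := fun m n => by conv_lhs => rw [← hBsymm, Matrix.transpose_apply]
  set u : Fin d → Fin k → ℝ := fun a b => W a b / W' a b with hu
  set c : Fin d → Fin k → Fin d → Fin k → ℝ :=
    fun i n j m => S i j * W' j m * B m n * W' i n with hc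
  have hcnn : ∀ i n j m, 0 ≤ c i n j m := fun i n j m => by
    have := (hW' j m).le; have := (hW' i n).le
    exact mul_nonneg (mul_nonneg (mul_nonneg (hS i j) (hW' j m).le) (hB m n)) (hW' i n).le
  have hcsymm : ∀ i n j m, c j m i n = c i n j m := fun i n j m => by
    simp only [hc]; rw [hS' i j, hB' m n]; ring
  -- LHS as a 4-sum in order i n j m
  have hL : (S * W * B * W.transpose).trace
      = ∑ i, ∑ n, ∑ j, ∑ m, c i n j m * (u j m * u i n) := by
    rw [trace_expand]
    apply Finset.sum_congr rfl; intro i _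
    rw [sum_rot3 (fun j m n => S i j * W j m * B m n * W i n)]
    refine Finset.sum_congr rfl fun n _ => Finset.sum_congr rfl fun j _ =>
      Finset.sum_congr rfl fun m _ => ?_
    have h1 := (hW' j m).ne'
    have h2 := (hW' i n).ne'
    simp only [hc, hu]
    field_simp
  -- RHS as a 4-sum in order i n j m
  have hR : (∑ i, ∑ n, (S * W' * B) i n * (W i n) ^ 2 / W' i n)
      = ∑ i, ∑ n, ∑ j, ∑ m, c i n j m * (u i n) ^ 2 := by
    apply Finset.sum_congr rfl; intro i _
    apply Finset.sum_congr rfl; intro n _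
    have hexp : (S * W' * B) i n = ∑ j, ∑ m, S i j * W' j m * B m n := by
      simp only [Matrix.mul_apply, Finset.sum_mul]
      rw [Finset.sum_comm]
    rw [hexp, Finset.sum_mul, Finset.sum_div]
    apply Finset.sum_congr rfl; intro j _
    rw [Finset.sum_mul, Finset.sum_div]
    apply Finset.sum_congr rfl; intro m _
    have h2 := (hW' i n).ne'
    simp only [hc, hu]
    field_simp
  rw [hL, hR]
  have hmid : (∑ i, ∑ n, ∑ j, ∑ m, c i n j m * (u j m) ^ 2)
      = ∑ i, ∑ n, ∑ j, ∑ m, c i n j m * (u i n) ^ 2 := by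
    rw [sum_swap4 (fun i n j m => c i n j m * (u j m) ^ 2)]
    exact sum4_congr _ _ fun i n j m => by rw [hcsymm]
  have hstep : (∑ i, ∑ n, ∑ j, ∑ m, c i n j m * (u j m * u i n))
      ≤ ∑ i, ∑ n, ∑ j, ∑ m,
          (c i n j m * (u j m) ^ 2 + c i n j m * (u i n) ^ 2) / 2 := by
    apply sum4_le; intro i n j m
    nlinarith [mul_nonneg (hcnn i n j m) (sq_nonneg (u j m - u i n))]
  refine hstep.trans (le_of_eq ?_)
  simp only [add_div]
  rw [show (∑ i, ∑ n, ∑ j, ∑ m, (c i n j m * u j m ^ 2 / 2 + c i n j m * u i n ^ 2 / 2))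
      = (∑ i, ∑ n, ∑ j, ∑ m, c i n j m * u j m ^ 2 / 2)
        + ∑ i, ∑ n, ∑ j, ∑ m, c i n j m * u i n ^ 2 / 2 by
    simp [Finset.sum_add_distrib]]
  have half : ∀ g : Fin d → Fin k → Fin d → Fin k → ℝ,
      (∑ i, ∑ n, ∑ j, ∑ m, g i n j m / 2) = (∑ i, ∑ n, ∑ j, ∑ m, g i n j m) / 2 := by
    intro g; simp [← Finset.sum_div]
  rw [half, half, hmid]
  ring


noncomputable def KAUFS_J (d k : ℕ) (Apos Aneg : Matrix (Fin d) (Fin d) ℝ)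
    (B : Matrix (Fin k) (Fin k) ℝ) (α : ℝ) (W : Matrix (Fin d) (Fin k) ℝ) : ℝ :=
  -(1/2) * (Apos * W * B * W.transpose).trace
    + (1/2) * (Aneg * W * B * W.transpose).trace
    + (α/2) * ((Matrix.of fun _ _ => (1 : ℝ) : Matrix (Fin d) (Fin d) ℝ) * W * W.transpose).trace
    - (α/2) * (W * W.transpose).trace

noncomputable def KAUFS_G (d k : ℕ) (Apos Aneg : Matrix (Fin d) (Fin d) ℝ)
    (B : Matrix (Fin k) (Fin k) ℝ) (α : ℝ)
    (W W' : Matrix (Fin d) (Fin k) ℝ) : ℝ :=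
  -(1/2) * ∑ i, ∑ j, ∑ m, ∑ n, Apos i j * W' j m * B m n * W' i n *
      (1 + Real.log (W j m * W i n / (W' j m * W' i n)))
    + (1/2) * ∑ i, ∑ j, (Aneg * W' * B) i j * (W i j) ^ 2 / W' i j
    + (α/2) * ∑ i, ∑ j, (((Matrix.of fun _ _ => (1 : ℝ) : Matrix (Fin d) (Fin d) ℝ)) * W') i j * (W i j) ^ 2 / W' i j
    - (α/2) * ∑ i, ∑ j, (W' i j) ^ 2 * (1 + Real.log ((W i j) ^ 2 / (W' i j) ^ 2))

theorem KAUFS_G_auxiliary (d k : ℕ) (Apos Aneg : Matrix (Fin d) (Fin d) ℝ)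
    (B : Matrix (Fin k) (Fin k) ℝ) (α : ℝ)
    (hApos : ∀ i j, 0 ≤ Apos i j) (hAneg : ∀ i j, 0 ≤ Aneg i j)
    (hAposSymm : Apos.transpose = Apos) (hAnegSymm : Aneg.transpose = Aneg)
    (hB : ∀ m n, 0 ≤ B m n) (hBsymm : B.transpose = B) (hα : 0 ≤ α)
    (W W' : Matrix (Fin d) (Fin k) ℝ)
    (hW : ∀ i j, 0 < W i j) (hW' : ∀ i j, 0 < W' i j) :
    KAUFS_J d k Apos Aneg B α W ≤ KAUFS_G d k Apos Aneg B α W W' := by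
  unfold KAUFS_J KAUFS_G
  -- Term 1
  have h1 : (∑ i, ∑ j, ∑ m, ∑ n, Apos i j * W' j m * B m n * W' i n *
        (1 + Real.log (W j m * W i n / (W' j m * W' i n))))
      ≤ (Apos * W * B * W.transpose).trace := by
    rw [trace_expand]
    refine Finset.sum_le_sum fun i _ => Finset.sum_le_sum fun j _ =>
      Finset.sum_le_sum fun m _ => Finset.sum_le_sum fun n _ => ?_
    have hcnn : (0:ℝ) ≤ Apos i j * W' j m * B m n * W' i n :=
      mul_nonneg (mul_nonneg (mul_nonneg (hApos i j) (hW' j m).le) (hB m n)) (hW' i n).le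
    have hxpos : (0:ℝ) < W j m * W i n / (W' j m * W' i n) :=
      div_pos (mul_pos (hW j m) (hW i n)) (mul_pos (hW' j m) (hW' i n))
    have hlog : 1 + Real.log (W j m * W i n / (W' j m * W' i n))
        ≤ W j m * W i n / (W' j m * W' i n) := by
      have := Real.log_le_sub_one_of_pos hxpos
      linarith
    calc Apos i j * W' j m * B m n * W' i n *
          (1 + Real.log (W j m * W i n / (W' j m * W' i n)))
        ≤ Apos i j * W' j m * B m n * W' i n * (W j m * W i n / (W' j m * W' i n)) :=
          mul_le_mul_of_nonneg_left hlog hcnn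
      _ = Apos i j * W j m * B m n * W i n := by
          have h1 := (hW' j m).ne'
          have h2 := (hW' i n).ne'
          field_simp
  -- Term 2
  have h2 : (Aneg * W * B * W.transpose).trace
      ≤ ∑ i, ∑ j, (Aneg * W' * B) i j * (W i j) ^ 2 / W' i j :=
    quad_bound d k Aneg B hAneg hAnegSymm hB hBsymm W W' hW'
  -- Term 3
  have h3 : ((Matrix.of fun _ _ => (1 : ℝ) : Matrix (Fin d) (Fin d) ℝ) * W * W.transpose).trace
      ≤ ∑ i, ∑ j, (((Matrix.of fun _ _ => (1 : ℝ) : Matrix (Fin d) (Fin d) ℝ)) * W') i j *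
          (W i j) ^ 2 / W' i j := by
    have := quad_bound d k (Matrix.of fun _ _ => (1 : ℝ)) (1 : Matrix (Fin k) (Fin k) ℝ)
      (fun _ _ => zero_le_one) (by ext i j; simp [Matrix.transpose_apply])
      (fun m n => by rw [Matrix.one_apply]; split_ifs <;> norm_num) Matrix.transpose_one
      W W' hW'
    rwa [Matrix.mul_one, Matrix.mul_one] at this
  -- Term 4
  have h4 : (∑ i, ∑ j, (W' i j) ^ 2 * (1 + Real.log ((W i j) ^ 2 / (W' i j) ^ 2)))
      ≤ (W * W.transpose).trace := by
    have htr : (W * W.transpose).trace = ∑ i, ∑ j, (W i j) ^ 2 := by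
      simp [Matrix.trace, Matrix.diag, Matrix.mul_apply, Matrix.transpose_apply, sq]
    rw [htr]
    refine Finset.sum_le_sum fun i _ => Finset.sum_le_sum fun j _ => ?_
    have hxpos : (0:ℝ) < (W i j) ^ 2 / (W' i j) ^ 2 :=
      div_pos (pow_pos (hW i j) 2) (pow_pos (hW' i j) 2)
    have hlog : 1 + Real.log ((W i j) ^ 2 / (W' i j) ^ 2) ≤ (W i j) ^ 2 / (W' i j) ^ 2 := by
      have := Real.log_le_sub_one_of_pos hxpos
      linarith
    calc (W' i j) ^ 2 * (1 + Real.log ((W i j) ^ 2 / (W' i j) ^ 2))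
        ≤ (W' i j) ^ 2 * ((W i j) ^ 2 / (W' i j) ^ 2) :=
          mul_le_mul_of_nonneg_left hlog (sq_nonneg _)
      _ = (W i j) ^ 2 := by
          have := (hW' i j).ne'
          field_simp
  have k2 := mul_le_mul_of_nonneg_left h2 (by norm_num : (0:ℝ) ≤ 1/2)
  have k3 := mul_le_mul_of_nonneg_left h3 (by positivity : (0:ℝ) ≤ α/2)
  have k1 := mul_le_mul_of_nonneg_left h1 (by norm_num : (0:ℝ) ≤ 1/2)
  have k4 := mul_le_mul_of_nonneg_left h4 (by positivity : (0:ℝ) ≤ α/2)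
  linarith
end
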